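/- Let γ > 0, let K be an m×n real matrix, let P be a real symmetric n×n matrix satisfying γ²(A − BK)ᵀP(A − BK) − P + Q + KᵀRK = 0, assume the matrix BᵀPB + (1/γ²)R is invertible, and set K' = (BᵀPB + (1/γ²)R)⁻¹BᵀPA. Then the following matrix identity holds: γ²(A − BK')ᵀP(A − BK') − P = −( Q + K'ᵀRK' + (K − K')ᵀ(γ²BᵀPB + R)(K − K') ). -/

import Mathlib

open Matrix

theorem stmt_6 {n m : ℕ}
    (A : Matrix (Fin n) (Fin n) ℝ) (B : Matrix (Fin n) (Fin m) ℝ)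
    (Q : Matrix (Fin n) (Fin n) ℝ) (R : Matrix (Fin m) (Fin m) ℝ)
    (hQ : Q.PosSemidef) (hR : R.PosDef)
    (γ : ℝ) (hγ : 0 < γ)
    (K : Matrix (Fin m) (Fin n) ℝ)
    (P : Matrix (Fin n) (Fin n) ℝ) (hPsymm : P.IsSymm)
    (hP : γ ^ 2 • ((A - B * K)ᵀ * P * (A - B * K)) - P + Q + Kᵀ * R * K = 0)
    (hInv : IsUnit (Bᵀ * P * B + (1 / γ ^ 2) • R))
    (K' : Matrix (Fin m) (Fin n) ℝ)
    (hK' : K' = (Bᵀ * P * B + (1 / γ ^ 2) • R)⁻¹ * (Bᵀ * P * A)) :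
    γ ^ 2 • ((A - B * K')ᵀ * P * (A - B * K')) - P =
      -(Q + K'ᵀ * R * K' + (K - K')ᵀ * (γ ^ 2 • (Bᵀ * P * B) + R) * (K - K')) := by
  have hγ2 : (γ : ℝ) ^ 2 ≠ 0 := pow_ne_zero 2 hγ.ne'
  have hPt : Pᵀ = P := hPsymm
  have hRt : Rᵀ = R := by
    have := hR.isHermitian
    rw [Matrix.IsHermitian, conjTranspose] at this
    ext i j
    simpa using congrFun (congrFun this i) j
  have hdet := (Matrix.isUnit_iff_isUnit_det _).mp hInv
  have hMK : (Bᵀ * P * B + (1 / γ ^ 2) • R) * K' = Bᵀ * P * A := by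
    rw [hK', Matrix.mul_nonsing_inv_cancel_left _ _ hdet]
  have hS : (γ ^ 2 • (Bᵀ * P * B) + R) * K' = γ ^ 2 • (Bᵀ * P * A) := by
    have hEq : γ ^ 2 • (Bᵀ * P * B) + R = γ ^ 2 • (Bᵀ * P * B + (1 / γ ^ 2) • R) := by
      rw [smul_add, smul_smul, mul_one_div, div_self hγ2, one_smul]
    rw [hEq, Matrix.smul_mul, hMK]
  have hST : K'ᵀ * (γ ^ 2 • (Bᵀ * P * B) + R) = γ ^ 2 • (Aᵀ * (P * B)) := by
    have := congrArg Matrix.transpose hS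
    simpa [Matrix.transpose_mul, Matrix.transpose_smul, Matrix.transpose_add,
      Matrix.transpose_transpose, hPt, hRt, Matrix.mul_assoc] using this
  have h1 := congrArg (fun X => Kᵀ * X) hS
  have h2 := congrArg (fun X => K'ᵀ * X) hS
  have h3 := congrArg (fun X => X * K) hST
  have h4 := congrArg (fun X => X * K') hST
  linear_combination (norm :=
    (simp only [Matrix.sub_mul, Matrix.mul_sub, Matrix.add_mul, Matrix.mul_add,
      Matrix.transpose_sub, Matrix.transpose_mul, Matrix.transpose_smul,
      Matrix.transpose_add, Matrix.transpose_transpose, hPt, hRt,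
      Matrix.smul_mul, Matrix.mul_smul, smul_add, smul_sub, Matrix.mul_assoc];
     abel1)) hP - h1 + h2 - h3 + h4
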